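/- Fix r ∈ (0,1) and q ≥ 0, and let F and C be as defined. Then F(1, q) = 0, ∂F/∂g(1, q) = 0, and F(g, q) = rq(g − 1)² + o((g − 1)²) as g → 1; that is, the function g ↦ F(g,q) − rq(g−1)² is little-o of (g−1)² at g = 1. -/

import Mathlib

open Asymptotics

/-- The integration constant `C(q)` (for fixed `r`). -/
noncomputable def Ccoef (r q : ℝ) : ℝ := r * (3 * r ^ 2 - q * (2 + r)) / ((1 - r) * (4 - r ^ 2))

/-- The right-hand side `F(g,q)` of the reduced first-order ODE (for fixed `r`). -/
noncomputable def Ffun (r q g : ℝ) : ℝ :=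
  (1 - q) / (1 - r) * g ^ (2 - 2 * r) - 2 * (3 - q) / (2 - r) * g ^ (2 - r)
    + 3 * g ^ (2 : ℝ) - 2 / (2 + r) * g ^ (2 + r) - Ccoef r q

/-- Derivative of `Ffun` in `g`. -/
noncomputable def Fder (r q g : ℝ) : ℝ :=
  (1 - q) / (1 - r) * ((2 - 2 * r) * g ^ (2 - 2 * r - 1))
    - 2 * (3 - q) / (2 - r) * ((2 - r) * g ^ (2 - r - 1))
    + 3 * ((2 : ℝ) * g ^ ((2 : ℝ) - 1))
    - 2 / (2 + r) * ((2 + r) * g ^ (2 + r - 1))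

private lemma hasDerivAt_Ffun (r q g : ℝ) (hg : g ≠ 0) :
    HasDerivAt (fun g => Ffun r q g) (Fder r q g) g := by
  unfold Ffun Fder
  exact (((((Real.hasDerivAt_rpow_const (p := 2 - 2 * r) (Or.inl hg)).const_mul _).sub
    ((Real.hasDerivAt_rpow_const (p := 2 - r) (Or.inl hg)).const_mul _)).add
    ((Real.hasDerivAt_rpow_const (p := (2 : ℝ)) (Or.inl hg)).const_mul _)).sub
    ((Real.hasDerivAt_rpow_const (p := 2 + r) (Or.inl hg)).const_mul _)).sub_const _

private lemma hasDerivAt_Fder (r q : ℝ) :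
    HasDerivAt (fun g => Fder r q g)
      ((1 - q) / (1 - r) * ((2 - 2 * r) * ((2 - 2 * r - 1) * (1 : ℝ) ^ (2 - 2 * r - 1 - 1)))
        - 2 * (3 - q) / (2 - r) * ((2 - r) * ((2 - r - 1) * (1 : ℝ) ^ (2 - r - 1 - 1)))
        + 3 * ((2 : ℝ) * (((2 : ℝ) - 1) * (1 : ℝ) ^ ((2 : ℝ) - 1 - 1)))
        - 2 / (2 + r) * ((2 + r) * ((2 + r - 1) * (1 : ℝ) ^ (2 + r - 1 - 1)))) 1 := by
  unfold Fder
  have hg : (1 : ℝ) ≠ 0 := one_ne_zero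
  exact ((((((Real.hasDerivAt_rpow_const (p := 2 - 2 * r - 1) (Or.inl hg)).const_mul
      (2 - 2 * r)).const_mul _).sub
    (((Real.hasDerivAt_rpow_const (p := 2 - r - 1) (Or.inl hg)).const_mul
      (2 - r)).const_mul _)).add
    (((Real.hasDerivAt_rpow_const (p := (2 : ℝ) - 1) (Or.inl hg)).const_mul
      (2 : ℝ)).const_mul _)).sub
    (((Real.hasDerivAt_rpow_const (p := 2 + r - 1) (Or.inl hg)).const_mul
      (2 + r)).const_mul _))

/-- `F(1,q) = 0`, `∂F/∂g(1,q) = 0`, and the second-order expansion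
`F(g,q) = rq(g−1)² + o((g−1)²)` as `g → 1`. -/
theorem gmKdV_expansion_at_one
    (r q : ℝ) (hr : r ∈ Set.Ioo (0 : ℝ) 1) (hq : 0 ≤ q) :
    Ffun r q 1 = 0
    ∧ deriv (fun g => Ffun r q g) 1 = 0
    ∧ (fun g : ℝ => Ffun r q g - r * q * (g - 1) ^ 2) =o[nhds 1]
        (fun g : ℝ => (g - 1) ^ 2) := by
  obtain ⟨hr0, hr1⟩ := hr
  have h1r : (1 : ℝ) - r ≠ 0 := by intro h; nlinarith
  have h2r : (2 : ℝ) - r ≠ 0 := by intro h; nlinarith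
  have h2r' : (2 : ℝ) + r ≠ 0 := by intro h; nlinarith
  have h4r : (4 : ℝ) - r ^ 2 ≠ 0 := by nlinarith
  -- value at 1
  have hval : Ffun r q 1 = 0 := by
    unfold Ffun Ccoef
    simp only [Real.one_rpow]
    field_simp
    ring
  -- derivative at 1
  have hFder1 : Fder r q 1 = 0 := by
    unfold Fder
    simp only [Real.one_rpow]
    field_simp
    ring
  have hderiv : deriv (fun g => Ffun r q g) 1 = 0 := by
    rw [(hasDerivAt_Ffun r q 1 one_ne_zero).deriv, hFder1]
  refine ⟨hval, hderiv, ?_⟩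
  -- the difference function and its derivative
  set h : ℝ → ℝ := fun g => Ffun r q g - r * q * (g - 1) ^ 2 with hh
  set h' : ℝ → ℝ := fun g => Fder r q g - r * q * (2 * (g - 1)) with hh'
  have hdh : ∀ g : ℝ, g ≠ 0 → HasDerivAt h (h' g) g := by
    intro g hg
    have h2 : HasDerivAt (fun g : ℝ => r * q * (g - 1) ^ 2) (r * q * (2 * (g - 1))) g := by
      have := (((hasDerivAt_id g).sub_const 1).pow 2).const_mul (r * q)
      refine this.congr_deriv ?_
      simp only [id_eq]
      ring
    exact (hasDerivAt_Ffun r q g hg).sub h2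
  -- h' has derivative 0 at 1
  have hdh' : HasDerivAt h' 0 1 := by
    have h2 : HasDerivAt (fun g : ℝ => r * q * (2 * (g - 1))) (r * q * 2) 1 := by
      have := (((hasDerivAt_id (1 : ℝ)).sub_const 1).const_mul 2).const_mul (r * q)
      refine this.congr_deriv ?_
      ring
    have := (hasDerivAt_Fder r q).sub h2
    refine this.congr_deriv ?_
    simp only [Real.one_rpow]
    field_simp
    ring
  have hh'1 : h' 1 = 0 := by
    simp only [hh', hFder1]
    ring
  -- h' = o(g - 1) at 1
  have hO1 : h' =o[nhds 1] fun g : ℝ => g - 1 := by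
    have := hdh'.isLittleO
    simpa [hh'1] using this
  -- conclude h = o((g-1)^2)
  have hO2 : h =o[nhds 1] fun g : ℝ => (g - 1) ^ 2 := by
    rw [isLittleO_iff]
    intro ε hε
    have hb := (isLittleO_iff.mp hO1) hε
    rw [Metric.eventually_nhds_iff] at hb
    obtain ⟨δ, hδ, hbd⟩ := hb
    have hδ' : 0 < min δ (1 / 2) := lt_min hδ (by norm_num)
    rw [Metric.eventually_nhds_iff]
    refine ⟨min δ (1 / 2), hδ', fun g hg => ?_⟩
    rw [Real.dist_eq] at hg
    have key : ∀ x ∈ Set.uIcc (1 : ℝ) g, |x - 1| ≤ |g - 1| := by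
      intro x hx
      rcases Set.mem_uIcc.mp hx with ⟨h1, h2⟩ | ⟨h1, h2⟩ <;>
        rw [abs_sub_le_iff] <;> constructor <;>
        rcases abs_cases (g - 1) with ⟨hc1, hc2⟩ | ⟨hc1, hc2⟩ <;> linarith
    have hpos : ∀ x ∈ Set.uIcc (1 : ℝ) g, x ≠ 0 := by
      intro x hx
      have := key x hx
      have hg2 : |g - 1| < 1 / 2 := lt_of_lt_of_le hg (min_le_right _ _)
      have : |x - 1| < 1 / 2 := lt_of_le_of_lt this hg2
      rw [abs_lt] at this
      intro h0
      rw [h0] at this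
      norm_num at this
    have hbound : ∀ x ∈ Set.uIcc (1 : ℝ) g, ‖h' x‖ ≤ ε * |g - 1| := by
      intro x hx
      have hx1 : |x - 1| < δ := by
        calc |x - 1| ≤ |g - 1| := key x hx
          _ < δ := lt_of_lt_of_le hg (min_le_left _ _)
      have := hbd (show dist x 1 < δ by rwa [Real.dist_eq])
      calc ‖h' x‖ ≤ ε * ‖x - 1‖ := this
        _ ≤ ε * |g - 1| := by
            apply mul_le_mul_of_nonneg_left _ (le_of_lt hε)
            simpa using key x hx
    have hmvt := (convex_uIcc (1 : ℝ) g).norm_image_sub_le_of_norm_hasDerivWithin_le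
      (fun x hx => ((hdh x (hpos x hx)).hasDerivWithinAt))
      hbound Set.left_mem_uIcc Set.right_mem_uIcc
    have hh1 : h 1 = 0 := by simp [hh, hval]
    calc ‖h g‖ = ‖h g - h 1‖ := by rw [hh1, sub_zero]
      _ ≤ ε * |g - 1| * ‖g - 1‖ := hmvt
      _ = ε * ‖(g - 1) ^ 2‖ := by
          rw [Real.norm_eq_abs, Real.norm_eq_abs, abs_pow]
          ring
  exact hO2
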